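/- Let K ⊆ (T₂ ∪ {∞})^d be the rank two tropical cone generated by v^(1), …, v^(n) ∈ (T₂ ∪ {∞})^d. Then a point p ∈ (T₂)^d (all coordinates finite) lies in K if and only if for every index i ∈ {1,…,d} there exists some j ∈ {1,…,n} with v^(j)_i ≠ ∞ and p ∈ Z_i(v^(j)). -/

import Mathlib

noncomputable section
open scoped Classical

/-- The rank two tropical semifield `T₂`: `ℝ²` with the lexicographic order. -/
abbrev T2 := Lex (ℝ × ℝ)

/-- `T₂ ∪ {∞}`. -/
abbrev T2i := WithTop T2

variable {d n : ℕ}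

/-- The tropical linear combination `min_j (λ_j + v^(j))` of generators. -/
def tropCombN (v : Fin n → Fin d → T2i) (lam : Fin n → T2i) : Fin d → T2i :=
  fun i => Finset.univ.inf fun j => lam j + v j i

/-- The rank two tropical cone generated by `v^(1), …, v^(n)`. -/
def genCone (v : Fin n → Fin d → T2i) : Set (Fin d → T2i) :=
  {x | ∃ lam : Fin n → T2i, x = tropCombN v lam}

/-- The `i`-th sector of `u`:
`Z_i(u) = ⋂_{k, u_k ≠ ∞} {p : p_k − p_i ≤_lex u_k − u_i}`. -/
def sector (u : Fin d → T2i) (i : Fin d) : Set (Fin d → T2) :=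
  {p | ∀ k, (↑(p k - p i) + u i : T2i) ≤ u k}

/-- The covector `S_p` of `p` w.r.t. generators `v`: the bipartite graph on
`[d] ⊔ [n]` with `(i,j) ∈ S_p` iff `v^(j)_i ≠ ∞` and `p ∈ Z_i(v^(j))`. -/
def covector (v : Fin n → Fin d → T2i) (p : Fin d → T2) : Set (Fin d × Fin n) :=
  {ij | v ij.2 ij.1 ≠ ⊤ ∧ p ∈ sector (v ij.2) ij.1}

/-- The covector cell `C_S = {p : S ⊆ S_p}`. -/
def cellC (v : Fin n → Fin d → T2i) (S : Set (Fin d × Fin n)) : Set (Fin d → T2) :=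
  {p | S ⊆ covector v p}

/-- `S` is a covector w.r.t. `v`. -/
def IsCovector (v : Fin n → Fin d → T2i) (S : Set (Fin d × Fin n)) : Prop :=
  ∃ p : Fin d → T2, S = covector v p

/-- A bipartite graph on `[d] ⊔ [n]` is bounded if no node of `[d]` is isolated. -/
def BoundedGraph (S : Set (Fin d × Fin n)) : Prop := ∀ i, ∃ j, (i, j) ∈ S

/-- No node of `[n]` is isolated. -/
def NoIsolatedGen (S : Set (Fin d × Fin n)) : Prop := ∀ j, ∃ i, (i, j) ∈ S

-- faces of covector cells
def faceC (v : Fin n → Fin d → T2i) (S : Set (Fin d × Fin n))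
    (E : Set (Fin d × Fin n × Fin d)) : Set (Fin d → T2) :=
  cellC v S ∩ {p | ∀ e ∈ E, (↑(p e.2.2 - p e.1) + v e.2.1 e.1 : T2i) = v e.2.1 e.2.2}

def IsFaceC (v : Fin n → Fin d → T2i) (S : Set (Fin d × Fin n))
    (F : Set (Fin d → T2)) : Prop :=
  ∃ E : Set (Fin d × Fin n × Fin d),
    (∀ e ∈ E, (e.1, e.2.1) ∈ S ∧ v e.2.1 e.2.2 ≠ ⊤) ∧ F = faceC v S E

def relintC (v : Fin n → Fin d → T2i) (S : Set (Fin d × Fin n)) : Set (Fin d → T2) :=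
  {p | p ∈ cellC v S ∧ ∀ F, IsFaceC v S F → F ≠ cellC v S → p ∉ F}

/-- The pairing `⟨s,p⟩ = ∑ i, s i • p i` between `ℤ^d` and `(T₂)^d`. -/
def pairE (s : Fin d → ℤ) (p : Fin d → T2) : T2 := ∑ i, s i • p i

/-- A lex-polyhedron in `(T₂)^d`. -/
def IsLexPolyE (P : Set (Fin d → T2)) : Prop :=
  ∃ (k : ℕ) (s : Fin k → Fin d → ℤ) (q : Fin k → T2),
    P = {p | ∀ i, pairE (s i) p ≤ q i}

-- rank one versions
def sector1 (u : Fin d → WithTop ℝ) (i : Fin d) : Set (Fin d → ℝ) :=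
  {p | ∀ k, (↑(p k - p i) + u i : WithTop ℝ) ≤ u k}

def covector1 (v : Fin n → Fin d → WithTop ℝ) (p : Fin d → ℝ) :
    Set (Fin d × Fin n) :=
  {ij | v ij.2 ij.1 ≠ ⊤ ∧ p ∈ sector1 (v ij.2) ij.1}

def cell1C (v : Fin n → Fin d → WithTop ℝ) (S : Set (Fin d × Fin n)) :
    Set (Fin d → ℝ) :=
  {p | S ⊆ covector1 v p}

def IsCovector1 (v : Fin n → Fin d → WithTop ℝ) (S : Set (Fin d × Fin n)) : Prop :=
  ∃ p : Fin d → ℝ, S = covector1 v p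

/-- Projection `π_{u*}` onto first coordinates (sending `∞` to `∞`). -/
def projU2 (x : T2i) : WithTop ℝ := WithTop.map (fun a => (ofLex a).1) x

/-- Projection `π_{t*}` onto second coordinates (sending `∞` to `∞`). -/
def projT2 (x : T2i) : WithTop ℝ := WithTop.map (fun a => (ofLex a).2) x

def genU (v : Fin n → Fin d → T2i) : Fin n → Fin d → WithTop ℝ :=
  fun j i => projU2 (v j i)

/-- The generators `V_T` of `K_T`. -/
def genRestrict (v : Fin n → Fin d → T2i) (T : Set (Fin d × Fin n)) :
    Fin n → Fin d → T2i :=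
  fun j i => if (i, j) ∈ T then v j i else ⊤

def genTB (v : Fin n → Fin d → T2i) (T : Set (Fin d × Fin n)) :
    Fin n → Fin d → WithTop ℝ :=
  fun j i => projT2 (genRestrict v T j i)

/-- The identification `(ℝ²)^d ≅ ℝ_t^d × ℝ_u^d = ℝ^{2d}`. -/
def embed2 (p : Fin d → T2) : (Fin d → ℝ) × (Fin d → ℝ) :=
  (fun i => (ofLex (p i)).1, fun i => (ofLex (p i)).2)

/-- The finite part of the tropical cone generated by `v`, as a subset of `(T₂)^d`. -/
def genConeFin (v : Fin n → Fin d → T2i) : Set (Fin d → T2) :=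
  {p | (fun i => (↑(p i) : T2i)) ∈ genCone v}

/-- A point `p ∈ (T₂)^d` lies in the rank two tropical cone
generated by `v^(1), …, v^(n)` iff for every `i ∈ [d]` there is some `j ∈ [n]` with
`v^(j)_i ≠ ∞` and `p ∈ Z_i(v^(j))`. -/
theorem cone_sector_cover (d n : ℕ) (v : Fin n → Fin d → T2i) (p : Fin d → T2) :
    (fun i => (↑(p i) : T2i)) ∈ genCone v ↔
      ∀ i, ∃ j, v j i ≠ ⊤ ∧ p ∈ sector (v j) i := by
  constructor
  · rintro ⟨lam, hlam⟩ i
    have hi : (↑(p i) : T2i) = Finset.univ.inf fun j => lam j + v j i :=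
      congrFun hlam i
    have hne : (Finset.univ : Finset (Fin n)).Nonempty := by
      by_contra h
      rw [Finset.not_nonempty_iff_eq_empty] at h
      rw [h] at hi; simp at hi
    obtain ⟨j, -, hj⟩ := Finset.exists_mem_eq_inf Finset.univ hne
      (fun j => lam j + v j i)
    rw [← hi] at hj
    have hlamne : lam j ≠ ⊤ := by
      intro h; rw [h, top_add] at hj; exact (WithTop.coe_ne_top hj)
    have hvne : v j i ≠ ⊤ := by
      intro h; rw [h, add_top] at hj; exact (WithTop.coe_ne_top hj)
    obtain ⟨a, ha⟩ := WithTop.ne_top_iff_exists.mp hlamne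
    obtain ⟨b, hb⟩ := WithTop.ne_top_iff_exists.mp hvne
    rw [← ha, ← hb, ← WithTop.coe_add, WithTop.coe_eq_coe] at hj
    refine ⟨j, hvne, fun k => ?_⟩
    have hk : (↑(p k) : T2i) ≤ lam j + v j k := by
      rw [congrFun hlam k]
      exact Finset.inf_le (Finset.mem_univ j)
    rw [← hb]
    rcases eq_or_ne (v j k) ⊤ with hvk | hvk
    · rw [hvk]; exact le_top
    obtain ⟨c, hc⟩ := WithTop.ne_top_iff_exists.mp hvk
    rw [← hc]
    rw [← hc, ← ha, ← WithTop.coe_add, WithTop.coe_le_coe] at hk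
    rw [← WithTop.coe_add, WithTop.coe_le_coe]
    have : p k - p i + b = p k - a := by rw [hj]; abel
    rw [this]
    exact sub_le_iff_le_add'.mpr hk
  · intro h
    choose f hf1 hf2 using h
    -- b i : finite value of v (f i) i
    have hb : ∀ i, ∃ b : T2, v (f i) i = ↑b := fun i =>
      (WithTop.ne_top_iff_exists.mp (hf1 i)).imp fun b hb => hb.symm
    choose b hbv using hb
    refine ⟨fun q => Finset.univ.inf fun i =>
      if f i = q then (↑(p i - b i) : T2i) else ⊤, funext fun i => ?_⟩
    apply le_antisymm
    · -- p i ≤ each term: suffices ∀ q, p i ≤ lam q + v q i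
      rw [tropCombN, Finset.le_inf_iff]
      intro q _
      -- lam q + v q i = inf_k (term k + v q i) essentially; argue via attained inf
      rcases eq_or_ne (Finset.univ.inf fun k =>
          if f k = q then (↑(p k - b k) : T2i) else ⊤) ⊤ with hq | hq
      · rw [hq, top_add]; exact le_top
      · have hne : (Finset.univ : Finset (Fin d)).Nonempty := by
          by_contra hh
          rw [Finset.not_nonempty_iff_eq_empty] at hh
          rw [hh] at hq; simp at hq
        obtain ⟨k, -, hk⟩ := Finset.exists_mem_eq_inf Finset.univ hne
          (fun k => if f k = q then (↑(p k - b k) : T2i) else ⊤)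
        rw [hk]
        rw [hk] at hq
        have hfk : f k = q := by
          by_contra hc; rw [if_neg hc] at hq; exact hq rfl
        rw [if_pos hfk]
        -- sector condition at k for generator q = f k
        have hs := hf2 k i
        rw [hbv k, hfk] at hs
        -- hs : ↑(p i - p k) + ↑(b k) ≤ v q i
        calc (↑(p i) : T2i) = ↑(p k - b k) + ↑(p i - p k + b k) := by
              rw [← WithTop.coe_add, WithTop.coe_eq_coe]; abel
          _ ≤ ↑(p k - b k) + v q i := by
              refine add_le_add_right (le_trans (le_of_eq ?_) hs) _
              exact WithTop.coe_add _ _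
    · -- inf ≤ term at q = f i
      refine le_trans (Finset.inf_le (Finset.mem_univ (f i))) ?_
      refine le_trans (add_le_add_left (Finset.inf_le (Finset.mem_univ i)) _) ?_
      rw [if_pos rfl, hbv i, ← WithTop.coe_add, WithTop.coe_le_coe]
      apply le_of_eq; abel
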